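/- Let G be a connected undirected weighted graph on N vertices with M edges and signed incidence matrix B ∈ R^{M×N}. Let Z and Z̃ be k×N real matrices satisfying Z·1 = Z̃·1 = 0, where 1 is the all-ones vector. Then for every vertex u, | ‖Z e_u‖ − ‖Z̃ e_u‖ | ≤ √N · ‖(Z − Z̃) Bᵀ‖_F, where ‖·‖_F denotes the Frobenius norm. -/

import Mathlib

open Matrix BigOperators

/-- The all-ones matrix `J`. -/
def JMat (V : Type*) : Matrix V V ℝ := Matrix.of fun _ _ => (1 : ℝ)

/-- The signed incidence matrix `B ∈ ℝ^{E×V}` of a graph whose edge `e` is oriented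
from `tail e` to `head e`: the row of `e` is `e_{tail e}ᵀ - e_{head e}ᵀ`. -/
def incMat {V E : Type*} [DecidableEq V] (tail head : E → V) : Matrix E V ℝ :=
  Matrix.of fun e v => (if v = tail e then (1 : ℝ) else 0) - (if v = head e then 1 else 0)

/-- The Laplacian `L = Bᵀ W B`, where `W` is the diagonal matrix of edge weights. -/
noncomputable def lapInc {V E : Type*} [Fintype V] [Fintype E] [DecidableEq V] [DecidableEq E]
    (tail head : E → V) (we : E → ℝ) : Matrix V V ℝ :=
  (incMat tail head)ᵀ * Matrix.diagonal we * incMat tail head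

/-- The pseudoinverse `L† = (L + (1/N)·J)⁻¹ - (1/N)·J` of the Laplacian. -/
noncomputable def lapDagInc {V E : Type*} [Fintype V] [Fintype E] [DecidableEq V] [DecidableEq E]
    (tail head : E → V) (we : E → ℝ) : Matrix V V ℝ :=
  (lapInc tail head we + ((Fintype.card V : ℝ))⁻¹ • JMat V)⁻¹ -
    ((Fintype.card V : ℝ))⁻¹ • JMat V

/-- Connectivity: any two vertices are joined by a chain of edges. -/
def ConnInc {V E : Type*} (tail head : E → V) : Prop :=
  ∀ a b : V, Relation.ReflTransGen
    (fun x y => ∃ e, (tail e = x ∧ head e = y) ∨ (tail e = y ∧ head e = x)) a b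

/-- Graph from tail/head maps. -/
def grInc {V E : Type*} (tail head : E → V) : SimpleGraph V where
  Adj x y := x ≠ y ∧ ∃ e, (tail e = x ∧ head e = y) ∨ (tail e = y ∧ head e = x)
  symm := by
    refine ⟨?_⟩; rintro x y ⟨hne, e, h⟩
    exact ⟨hne.symm, e, h.symm⟩
  loopless := ⟨fun x h => h.1 rfl⟩

lemma telescope_aux {V : Type*} {G : SimpleGraph V} (d : V → ℝ) :
    ∀ {a b : V} (q : G.Walk a b),
      d a - d b = (q.darts.map (fun t => d t.toProd.1 - d t.toProd.2)).sum := by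
  intro a b q
  induction q with
  | nil => simp
  | cons h p ih =>
      simp only [SimpleGraph.Walk.darts_cons, List.map_cons, List.sum_cons, ← ih]
      ring

lemma pair_bound {V E : Type*} [Fintype V] [DecidableEq V] [Fintype E]
    (tail head : E → V)
    (hth : ∀ e, tail e ≠ head e) (hconn : ConnInc tail head)
    (d : V → ℝ) (a b : V) :
    (d a - d b) ^ 2 ≤ ((Fintype.card V : ℝ) - 1) * ∑ e, (d (tail e) - d (head e)) ^ 2 := by
  classical
  set G := grInc tail head with hG
  set S := ∑ e, (d (tail e) - d (head e)) ^ 2 with hS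
  have hS0 : 0 ≤ S := Finset.sum_nonneg fun e _ => sq_nonneg _
  have hre : G.Reachable a b := by
    have h := hconn a b
    induction h with
    | refl => exact SimpleGraph.Reachable.refl a
    | tail _ hstep ih =>
        refine ih.trans (SimpleGraph.Adj.reachable ?_)
        obtain ⟨e, he⟩ := hstep
        refine (⟨?_, e, he⟩ : (grInc tail head).Adj _ _)
        rcases he with ⟨h1, h2⟩ | ⟨h1, h2⟩
        · rw [← h1, ← h2]; exact hth e
        · rw [← h1, ← h2]; exact (hth e).symm
  obtain ⟨w⟩ := hre
  set p := w.toPath with hp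
  have hpath : p.1.IsPath := p.2
  have hnodupE : p.1.edges.Nodup := hpath.isTrail.edges_nodup
  have hnodupD : p.1.darts.Nodup := hnodupE.of_map _
  set s : Finset G.Dart := p.1.darts.toFinset with hs
  have hcard : (s.card : ℝ) ≤ (Fintype.card V : ℝ) - 1 := by
    have h1 : s.card = p.1.darts.length := List.toFinset_card_of_nodup hnodupD
    have h2 : p.1.darts.length = p.1.length := SimpleGraph.Walk.length_darts _
    have h3 : p.1.length < Fintype.card V := hpath.length_lt
    have h4 : s.card + 1 ≤ Fintype.card V := by omega
    have h5 : (s.card : ℝ) + 1 ≤ (Fintype.card V : ℝ) := by exact_mod_cast h4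
    linarith
  have htel : d a - d b = ∑ t ∈ s, (d t.toProd.1 - d t.toProd.2) := by
    rw [telescope_aux d p.1, hs, List.sum_toFinset _ hnodupD]
  have hch : ∀ t : G.Dart, ∃ e, (tail e = t.toProd.1 ∧ head e = t.toProd.2) ∨
      (tail e = t.toProd.2 ∧ head e = t.toProd.1) := fun t => (t.adj : (grInc tail head).Adj _ _).2
  choose f hf using hch
  have hinj : Set.InjOn f s := by
    intro t1 ht1 t2 ht2 hfe
    have hedge : ∀ t : G.Dart, t.edge = s(tail (f t), head (f t)) := by
      intro t
      rcases hf t with ⟨h1, h2⟩ | ⟨h1, h2⟩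
      · rw [SimpleGraph.Dart.edge, h1, h2]
      · rw [SimpleGraph.Dart.edge, h1, h2, Sym2.eq_swap]
    have hte : t1.edge = t2.edge := by rw [hedge t1, hedge t2, hfe]
    exact List.inj_on_of_nodup_map hnodupE (by simpa [hs] using ht1)
      (by simpa [hs] using ht2) hte
  have hsq : ∀ t ∈ s, (d t.toProd.1 - d t.toProd.2) ^ 2
      = (d (tail (f t)) - d (head (f t))) ^ 2 := by
    intro t _
    rcases hf t with ⟨h1, h2⟩ | ⟨h1, h2⟩ <;> rw [h1, h2] <;> ring
  have hsum_le : ∑ t ∈ s, (d t.toProd.1 - d t.toProd.2) ^ 2 ≤ S := by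
    rw [Finset.sum_congr rfl hsq]
    calc ∑ t ∈ s, (d (tail (f t)) - d (head (f t))) ^ 2
        = ∑ e ∈ s.image f, (d (tail e) - d (head e)) ^ 2 :=
          (Finset.sum_image (f := fun e => (d (tail e) - d (head e)) ^ 2)
            (fun x hx y hy h => hinj hx hy h)).symm
      _ ≤ S := Finset.sum_le_sum_of_subset_of_nonneg (Finset.subset_univ _)
          (fun e _ _ => sq_nonneg _)
  calc (d a - d b) ^ 2 = (∑ t ∈ s, (d t.toProd.1 - d t.toProd.2)) ^ 2 := by rw [htel]
    _ ≤ (s.card : ℝ) * ∑ t ∈ s, (d t.toProd.1 - d t.toProd.2) ^ 2 := by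
        exact sq_sum_le_card_mul_sum_sq (s := s)
          (f := fun t => d t.toProd.1 - d t.toProd.2)
    _ ≤ ((Fintype.card V : ℝ) - 1) * S := by
        apply mul_le_mul hcard hsum_le (Finset.sum_nonneg fun t _ => sq_nonneg _)
        linarith

lemma core_bound {V E : Type*} [Fintype V] [DecidableEq V] [Fintype E]
    (hN : 2 ≤ Fintype.card V)
    (tail head : E → V)
    (hth : ∀ e, tail e ≠ head e) (hconn : ConnInc tail head)
    (d : V → ℝ) (hd : ∑ v, d v = 0) (u : V) :
    d u ^ 2 ≤ (Fintype.card V : ℝ) * ∑ e, (d (tail e) - d (head e)) ^ 2 := by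
  classical
  set N : ℝ := (Fintype.card V : ℝ) with hNdef
  have hN1 : (1 : ℝ) ≤ N := by
    rw [hNdef]
    have : (1 : ℕ) ≤ Fintype.card V := le_trans (by norm_num) hN
    exact_mod_cast this
  set S := ∑ e, (d (tail e) - d (head e)) ^ 2 with hS
  have hS0 : 0 ≤ S := Finset.sum_nonneg fun e _ => sq_nonneg _
  have h1 : N * d u = ∑ v, (d u - d v) := by
    rw [Finset.sum_sub_distrib, hd, Finset.sum_const, Finset.card_univ, sub_zero,
      nsmul_eq_mul]
  have h2 : (∑ v : V, (d u - d v)) ^ 2 ≤ N * ∑ v : V, (d u - d v) ^ 2 := by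
    have := sq_sum_le_card_mul_sum_sq (s := (Finset.univ : Finset V))
      (f := fun v => d u - d v)
    simpa [Finset.card_univ] using this
  have h3 : ∑ v : V, (d u - d v) ^ 2 ≤ N * ((N - 1) * S) := by
    calc ∑ v : V, (d u - d v) ^ 2 ≤ ∑ _v : V, (N - 1) * S :=
          Finset.sum_le_sum fun v _ => pair_bound tail head hth hconn d u v
      _ = N * ((N - 1) * S) := by
          rw [Finset.sum_const, Finset.card_univ, nsmul_eq_mul]
  have hkey : N ^ 2 * d u ^ 2 ≤ N ^ 2 * ((N - 1) * S) := by
    calc N ^ 2 * d u ^ 2 = (N * d u) ^ 2 := by ring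
      _ = (∑ v : V, (d u - d v)) ^ 2 := by rw [h1]
      _ ≤ N * ∑ v : V, (d u - d v) ^ 2 := h2
      _ ≤ N * (N * ((N - 1) * S)) := by
          exact mul_le_mul_of_nonneg_left h3 (by linarith)
      _ = N ^ 2 * ((N - 1) * S) := by ring
  have hNpos : 0 < N ^ 2 := by positivity
  have := le_of_mul_le_mul_left (by linarith [hkey] : N ^ 2 * d u ^ 2 ≤ N ^ 2 * ((N - 1) * S))
    hNpos
  nlinarith [sq_nonneg (d u)]

/-- For `k×N` matrices `Z`, `Z̃` with `Z·1 = Z̃·1 = 0`, and every vertex `u`,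
`| ‖Z e_u‖ - ‖Z̃ e_u‖ | ≤ √N · ‖(Z - Z̃) Bᵀ‖_F`. -/
theorem stmt_8 {V E : Type*} [Fintype V] [DecidableEq V] [Fintype E] [DecidableEq E]
    (hN : 2 ≤ Fintype.card V)
    (tail head : E → V) (we : E → ℝ)
    (hth : ∀ e, tail e ≠ head e) (hpos : ∀ e, 0 < we e)
    (hconn : ConnInc tail head)
    (k : ℕ) (Z Zt : Matrix (Fin k) V ℝ)
    (hZ : Z *ᵥ (fun _ => (1 : ℝ)) = 0) (hZt : Zt *ᵥ (fun _ => (1 : ℝ)) = 0)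
    (u : V) :
    |Real.sqrt (∑ i, Z i u ^ 2) - Real.sqrt (∑ i, Zt i u ^ 2)| ≤
      Real.sqrt (Fintype.card V) *
        Real.sqrt (∑ i, ∑ e, ((Z - Zt) * (incMat tail head)ᵀ) i e ^ 2) := by
  classical
  set D : Matrix (Fin k) V ℝ := Z - Zt with hD
  -- Step 1: LHS ≤ sqrt (∑ i, D i u ^ 2)
  have step1 : |Real.sqrt (∑ i, Z i u ^ 2) - Real.sqrt (∑ i, Zt i u ^ 2)| ≤
      Real.sqrt (∑ i, D i u ^ 2) := by
    set a : EuclideanSpace ℝ (Fin k) := WithLp.toLp 2 (fun i => Z i u) with ha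
    set b : EuclideanSpace ℝ (Fin k) := WithLp.toLp 2 (fun i => Zt i u) with hb
    have hna : ‖a‖ = Real.sqrt (∑ i, Z i u ^ 2) := by
      rw [EuclideanSpace.norm_eq]
      congr 1
      exact Finset.sum_congr rfl fun i _ => by rw [Real.norm_eq_abs, sq_abs]
    have hnb : ‖b‖ = Real.sqrt (∑ i, Zt i u ^ 2) := by
      rw [EuclideanSpace.norm_eq]
      congr 1
      exact Finset.sum_congr rfl fun i _ => by rw [Real.norm_eq_abs, sq_abs]
    have hnab : ‖a - b‖ = Real.sqrt (∑ i, D i u ^ 2) := by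
      rw [EuclideanSpace.norm_eq]
      congr 1
      exact Finset.sum_congr rfl fun i _ => by
        simp [ha, hb, hD, Real.norm_eq_abs, sq_abs, Matrix.sub_apply]
    rw [← hna, ← hnb, ← hnab]
    exact abs_norm_sub_norm_le a b
  -- the matrix product entry
  have hentry : ∀ i e, (D * (incMat tail head)ᵀ) i e = D i (tail e) - D i (head e) := by
    intro i e
    simp only [Matrix.mul_apply, Matrix.transpose_apply, incMat, Matrix.of_apply]
    rw [Finset.sum_congr rfl (fun v _ => mul_sub (D i v) _ _)]
    rw [Finset.sum_sub_distrib]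
    congr 1
    · rw [Finset.sum_eq_single (tail e)] <;> simp +contextual
    · rw [Finset.sum_eq_single (head e)] <;> simp +contextual
  -- Step 2: row sums
  have hrow : ∀ i, ∑ v, D i v = 0 := by
    intro i
    have h1 : ∑ v, Z i v = 0 := by
      have := congrFun hZ i
      simpa [Matrix.mulVec, dotProduct] using this
    have h2 : ∑ v, Zt i v = 0 := by
      have := congrFun hZt i
      simpa [Matrix.mulVec, dotProduct] using this
    simp [hD, Matrix.sub_apply, Finset.sum_sub_distrib, h1, h2]
  have step2 : ∑ i, D i u ^ 2 ≤
      (Fintype.card V : ℝ) * ∑ i, ∑ e, ((Z - Zt) * (incMat tail head)ᵀ) i e ^ 2 := by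
    rw [Finset.mul_sum]
    apply Finset.sum_le_sum
    intro i _
    have := core_bound hN tail head hth hconn (fun v => D i v) (hrow i) u
    calc D i u ^ 2 ≤ (Fintype.card V : ℝ) * ∑ e, (D i (tail e) - D i (head e)) ^ 2 := this
      _ = (Fintype.card V : ℝ) * ∑ e, ((Z - Zt) * (incMat tail head)ᵀ) i e ^ 2 := by
          congr 1
          exact Finset.sum_congr rfl fun e _ => by rw [hentry i e]
  -- conclude
  refine step1.trans ?_
  rw [← Real.sqrt_mul (by positivity)]
  exact Real.sqrt_le_sqrt step2
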